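/- Let 0 < ε₁ < ε∞, n ≥ 1, and set A = e^{ε∞}, E = e^{ε₁}, p₁ = 1/2, q₁ = 1/(A+1), p₂ = (A·E − 1)/(A − E + A·E − 1), q₂ = 1 − p₂. Then the approximate variance V* = (p₂q₁ − q₂(q₁−1))·(−p₂q₁ + q₂(q₁−1) + 1)/(n·(p₁−q₁)²·(p₂−q₂)²) equals 4·e^{ε₁}/(n·(e^{ε₁} − 1)²) = 4e^{ε₁}/(n(e^{2ε₁} − 2e^{ε₁} + 1)). -/

import Mathlib

/-- **Approximate variance of L-OSUE.** For `0 < ε₁ < εinf`, `n ≥ 1`, with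
`A = e^{εinf}`, `E = e^{ε₁}`, `p₁ = 1/2`, `q₁ = 1/(A+1)`,
`p₂ = (A·E − 1)/(A − E + A·E − 1)`, `q₂ = 1 − p₂`, the approximate variance
`V* = (p₂q₁ − q₂(q₁−1))·(−p₂q₁ + q₂(q₁−1) + 1)/(n·(p₁−q₁)²·(p₂−q₂)²)` equals
`4·e^{ε₁}/(n·(e^{ε₁} − 1)²) = 4e^{ε₁}/(n(e^{2ε₁} − 2e^{ε₁} + 1))`. -/
theorem losue_approximate_variance
    (ε₁ εinf : ℝ) (h₁ : 0 < ε₁) (h₂ : ε₁ < εinf)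
    (n : ℕ) (hn : 1 ≤ n)
    (A E p₁ q₁ p₂ q₂ : ℝ)
    (hA : A = Real.exp εinf) (hE : E = Real.exp ε₁)
    (hp₁ : p₁ = 1 / 2) (hq₁ : q₁ = 1 / (A + 1))
    (hp₂ : p₂ = (A * E - 1) / (A - E + A * E - 1)) (hq₂ : q₂ = 1 - p₂) :
    (p₂ * q₁ - q₂ * (q₁ - 1)) * (-(p₂ * q₁) + q₂ * (q₁ - 1) + 1) /
        ((n : ℝ) * (p₁ - q₁) ^ 2 * (p₂ - q₂) ^ 2) =
      4 * Real.exp ε₁ / ((n : ℝ) * (Real.exp ε₁ - 1) ^ 2) ∧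
    4 * Real.exp ε₁ / ((n : ℝ) * (Real.exp ε₁ - 1) ^ 2) =
      4 * Real.exp ε₁ /
        ((n : ℝ) * (Real.exp (2 * ε₁) - 2 * Real.exp ε₁ + 1)) := by
  have hE1 : 1 < E := by rw [hE]; exact Real.one_lt_exp_iff.mpr h₁
  have hAE : E < A := by rw [hA, hE]; exact Real.exp_lt_exp.mpr h₂
  have hA1 : 1 < A := hE1.trans hAE
  have hn0 : (n : ℝ) ≠ 0 := by positivity
  have hA1' : A + 1 ≠ 0 := by nlinarith
  have hD : (0:ℝ) < A - E + A * E - 1 := by nlinarith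
  have hD' : A - E + A * E - 1 ≠ 0 := ne_of_gt hD
  have hE1' : E - 1 ≠ 0 := by nlinarith
  have hA1'' : A - 1 ≠ 0 := by nlinarith
  have hN : p₂ * q₁ - q₂ * (q₁ - 1) = (A - 1) / (A - E + A * E - 1) := by
    rw [hq₂, hp₂, hq₁]; field_simp; ring
  have hM : -(p₂ * q₁) + q₂ * (q₁ - 1) + 1
      = E * (A - 1) / (A - E + A * E - 1) := by
    rw [hq₂, hp₂, hq₁]; field_simp; ring
  have hpq1 : p₁ - q₁ = (A - 1) / (2 * (A + 1)) := by
    rw [hp₁, hq₁]; field_simp; ring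
  have hpq2 : p₂ - q₂ = (A + 1) * (E - 1) / (A - E + A * E - 1) := by
    rw [hq₂, hp₂]; field_simp; ring
  have hDen : (n : ℝ) * (p₁ - q₁) ^ 2 * (p₂ - q₂) ^ 2
      = (n : ℝ) * ((A - 1) ^ 2 * (E - 1) ^ 2) / (4 * (A - E + A * E - 1) ^ 2) := by
    rw [hpq1, hpq2]; field_simp; ring
  constructor
  · rw [hN, hM, hDen, ← hE]
    field_simp
  · congr 2
    rw [two_mul, Real.exp_add]; ring
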